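/- Fix reals a ≥ 0 and 0 ≤ α ≤ β. Then lim_{n→∞} sup_{x≥0} |T_{n,a}^{α,β}(t;x) − x|/(1+x²) = 0, where T_{n,a}^{α,β}(t;x) denotes the operator applied to the identity function t ↦ t. -/

import Mathlib

open MeasureTheory Filter

/-- Rising factorial `(n)_i = n(n+1)⋯(n+i−1)`, with `(n)_0 = 1`. -/
noncomputable def risingFac (n i : ℕ) : ℝ := ∏ j ∈ Finset.range i, ((n : ℝ) + j)

/-- `p_k(n,a) = Σ_{i=0}^{k} C(k,i)·(n)_i·a^{k−i}`. -/
noncomputable def pCoef (n : ℕ) (a : ℝ) (k : ℕ) : ℝ :=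
  ∑ i ∈ Finset.range (k + 1), (Nat.choose k i : ℝ) * risingFac n i * a ^ (k - i)

/-- Generalized Baskakov basis function `W_{n,k}^a(x)`. -/
noncomputable def W (n : ℕ) (a : ℝ) (k : ℕ) (x : ℝ) : ℝ :=
  Real.exp (-(a * x) / (1 + x)) * (pCoef n a k / (Nat.factorial k : ℝ)) * x ^ k /
    (1 + x) ^ (k + n)

/-- Stancu-type operator `L_{n,a}^{α,β}(f;x) = Σ_k W_{n,k}^a(x) f((k+α)/(n+β))`. -/
noncomputable def Lop (n : ℕ) (a α β : ℝ) (f : ℝ → ℝ) (x : ℝ) : ℝ :=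
  ∑' k : ℕ, W n a k x * f (((k : ℝ) + α) / ((n : ℝ) + β))

/-- Generalized Baskakov–Kantorovich–Stancu operator `T_{n,a}^{α,β}(f;x)`. -/
noncomputable def TKS (n : ℕ) (a α β : ℝ) (f : ℝ → ℝ) (x : ℝ) : ℝ :=
  ((n : ℝ) + β) *
    ∑' k : ℕ, W n a k x *
      ∫ t in (((k : ℝ) + α) / ((n : ℝ) + β))..(((k : ℝ) + α + 1) / ((n : ℝ) + β)), f t

lemma risingFac_zero (n : ℕ) : risingFac n 0 = 1 := by simp [risingFac]

lemma risingFac_succ (n i : ℕ) : risingFac n (i+1) = risingFac n i * ((n:ℝ) + i) := by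
  simp [risingFac, Finset.prod_range_succ]

lemma n_mul_risingFac (n i : ℕ) : (n : ℝ) * risingFac (n+1) i = risingFac n (i+1) := by
  induction i with
  | zero => simp [risingFac_zero, risingFac_succ]
  | succ i ih =>
      rw [risingFac_succ (n+1) i, risingFac_succ n (i+1), ← ih]
      push_cast; ring

lemma choose_id (m i : ℕ) :
    (i+1) * (i + m + 1).choose (i+1) = (i + m + 1) * (i + m).choose i := by
  have h2 := Nat.add_one_mul_choose_eq (i + m) i
  exact (Nat.mul_comm _ _).trans h2.symm

lemma risingFac_eq (m i : ℕ) :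
    risingFac (m+1) i = (i.factorial : ℝ) * ((i + m).choose m : ℝ) := by
  induction i with
  | zero => simp [risingFac_zero]
  | succ i ih =>
      rw [risingFac_succ, ih]
      have e1 : (i+m).choose m = (i+m).choose i := by
        calc (i+m).choose m = (i+m).choose ((i+m)-i) := by congr 1 <;> omega
          _ = (i+m).choose i := Nat.choose_symm (by omega)
      have e2 : (i+1+m).choose m = (i+m+1).choose (i+1) := by
        calc (i+1+m).choose m = (i+m+1).choose ((i+m+1)-(i+1)) := by congr 1 <;> omega
          _ = (i+m+1).choose (i+1) := Nat.choose_symm (by omega)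
      have h := choose_id m i
      have hfac : ((i+1).factorial : ℝ) = ((i:ℝ)+1) * (i.factorial : ℝ) := by
        rw [Nat.factorial_succ]; push_cast; ring
      rw [e2, hfac, e1]
      have hc := congrArg (fun z : ℕ => (z : ℝ)) h
      push_cast at hc ⊢
      linear_combination (i.factorial : ℝ) * hc.symm

lemma risingFac_nonneg (n i : ℕ) : 0 ≤ risingFac n i := by
  apply Finset.prod_nonneg; intro j _; positivity

lemma hasSum_risingFac {m : ℕ} {t : ℝ} (ht : |t| < 1) :
    HasSum (fun i => risingFac (m+1) i * t^i / (i.factorial : ℝ)) (1 / (1-t)^(m+1)) := by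
  have h := hasSum_choose_mul_geometric_of_norm_lt_one (𝕜 := ℝ) m (r := t)
    (by simpa [Real.norm_eq_abs] using ht)
  convert! h using 2 with i
  rw [risingFac_eq]
  have : (i.factorial : ℝ) ≠ 0 := by positivity
  field_simp
lemma pCoef_succ (n : ℕ) (a : ℝ) (k : ℕ) :
    pCoef n a (k+1) = a * pCoef n a k + (n : ℝ) * pCoef (n+1) a k := by
  unfold pCoef
  have hA : a * ∑ i ∈ Finset.range (k + 1), (Nat.choose k i : ℝ) * risingFac n i * a ^ (k - i)
      = (∑ i ∈ Finset.range (k + 1),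
          (Nat.choose k (i+1) : ℝ) * risingFac n (i+1) * a ^ (k - i)) + a ^ (k+1) := by
    rw [Finset.mul_sum,
      Finset.sum_range_succ' (fun i => a * ((Nat.choose k i : ℝ) * risingFac n i * a ^ (k - i))),
      Finset.sum_range_succ (fun i => (Nat.choose k (i+1) : ℝ) * risingFac n (i+1) * a ^ (k - i))]
    have hz : ((Nat.choose k (k+1) : ℝ)) = 0 := by
      norm_cast; exact Nat.choose_eq_zero_of_lt (by omega)
    rw [hz]
    simp only [risingFac_zero, Nat.choose_zero_right, Nat.cast_one, zero_mul, mul_one,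
      Nat.sub_zero, add_zero, one_mul]
    congr 1
    · apply Finset.sum_congr rfl
      intro i hi
      simp only [Finset.mem_range] at hi
      have h : k - i = (k - (i+1)) + 1 := by omega
      rw [h, pow_succ]
      ring
    · rw [pow_succ]; ring
  have hB : (n : ℝ) * ∑ i ∈ Finset.range (k + 1),
        (Nat.choose k i : ℝ) * risingFac (n+1) i * a ^ (k - i)
      = ∑ i ∈ Finset.range (k + 1),
          (Nat.choose k i : ℝ) * risingFac n (i+1) * a ^ (k - i) := by
    rw [Finset.mul_sum]
    apply Finset.sum_congr rfl
    intro i _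
    rw [← n_mul_risingFac]
    ring
  rw [hA, hB,
    Finset.sum_range_succ' (fun i => (Nat.choose (k+1) i : ℝ) * risingFac n i * a ^ (k + 1 - i))]
  simp only [risingFac_zero, Nat.choose_zero_right, Nat.cast_one, mul_one, Nat.sub_zero, one_mul]
  have hsum : ∑ i ∈ Finset.range (k + 1),
        (Nat.choose (k+1) (i+1) : ℝ) * risingFac n (i+1) * a ^ (k + 1 - (i+1))
      = (∑ i ∈ Finset.range (k + 1),
          (Nat.choose k (i+1) : ℝ) * risingFac n (i+1) * a ^ (k - i))
        + ∑ i ∈ Finset.range (k + 1),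
            (Nat.choose k i : ℝ) * risingFac n (i+1) * a ^ (k - i) := by
    rw [← Finset.sum_add_distrib]
    apply Finset.sum_congr rfl
    intro i _
    have h : k + 1 - (i+1) = k - i := by omega
    rw [h, Nat.choose_succ_succ]
    push_cast
    ring
  rw [hsum]
  ring

lemma hasSum_W {n : ℕ} {a x : ℝ} (ha : 0 ≤ a) (hn : 1 ≤ n) (hx : 0 ≤ x) :
    HasSum (fun k => W n a k x) 1 := by
  obtain ⟨m, rfl⟩ : ∃ m, n = m + 1 := ⟨n - 1, by omega⟩
  have h1x : (0:ℝ) < 1 + x := by linarith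
  set t : ℝ := x / (1 + x) with ht_def
  have ht0 : 0 ≤ t := by positivity
  have ht1 : t < 1 := by rw [div_lt_one h1x]; linarith
  have htabs : |t| < 1 := by rw [abs_of_nonneg ht0]; exact ht1
  set f : ℕ → ℝ := fun i => risingFac (m+1) i * t^i / (i.factorial : ℝ) with hf_def
  set g : ℕ → ℝ := fun j => (a*t)^j / (j.factorial : ℝ) with hg_def
  have hf : HasSum f (1 / (1-t)^(m+1)) := hasSum_risingFac htabs
  have hg : HasSum g (Real.exp (a*t)) := by
    rw [Real.exp_eq_exp_ℝ]
    exact NormedSpace.expSeries_div_hasSum_exp (a*t)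
  have hfn : ∀ i, 0 ≤ f i := fun i => by
    have := risingFac_nonneg (m+1) i
    positivity
  have hgn : ∀ j, 0 ≤ g j := fun j => by positivity
  have hf' : Summable fun i => ‖f i‖ := by
    simpa [Real.norm_eq_abs, abs_of_nonneg, hfn] using hf.summable
  have hg' : Summable fun j => ‖g j‖ := by
    simpa [Real.norm_eq_abs, abs_of_nonneg, hgn] using hg.summable
  have hC := hasSum_sum_range_mul_of_summable_norm hf' hg'
  rw [hf.tsum_eq, hg.tsum_eq] at hC
  have hterm : ∀ k, ∑ i ∈ Finset.range (k+1), f i * g (k - i)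
      = pCoef (m+1) a k / (k.factorial : ℝ) * t^k := by
    intro k
    rw [pCoef, Finset.sum_div, Finset.sum_mul]
    apply Finset.sum_congr rfl
    intro i hi
    simp only [Finset.mem_range] at hi
    have hik : i ≤ k := by omega
    have hi0 : (i.factorial : ℝ) ≠ 0 := by positivity
    have hki0 : ((k-i).factorial : ℝ) ≠ 0 := by positivity
    have hk0 : (k.factorial : ℝ) ≠ 0 := by positivity
    have hchoose : ((Nat.choose k i : ℝ)) = (k.factorial : ℝ) /
        ((i.factorial : ℝ) * ((k-i).factorial : ℝ)) := by
      rw [eq_div_iff (by positivity), ← mul_assoc]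
      exact_mod_cast congrArg (fun z : ℕ => (z:ℝ)) (Nat.choose_mul_factorial_mul_factorial hik)
    have hpow : t^i * t^(k-i) = t^k := by rw [← pow_add]; congr 1; omega
    simp only [hf_def, hg_def]
    rw [hchoose, mul_pow, ← hpow]
    field_simp
  have hC2 : HasSum (fun k => pCoef (m+1) a k / (k.factorial : ℝ) * t^k)
      (1 / (1-t)^(m+1) * Real.exp (a*t)) := by
    convert! hC using 2 with k
    exact (hterm k).symm
  set c : ℝ := Real.exp (-(a * x) / (1 + x)) / (1+x)^(m+1) with hc_def
  have hmain := hC2.mul_left c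
  have hWeq : (fun k => c * (pCoef (m+1) a k / (k.factorial : ℝ) * t^k))
      = fun k => W (m+1) a k x := by
    funext k
    rw [W, hc_def, ht_def, div_pow, pow_add]
    have h1 : (1+x) ≠ 0 := ne_of_gt h1x
    have h2 : ((1+x):ℝ)^k ≠ 0 := pow_ne_zero _ h1
    have h3 : ((1+x):ℝ)^(m+1) ≠ 0 := pow_ne_zero _ h1
    have hk0 : (k.factorial : ℝ) ≠ 0 := by positivity
    field_simp
    ring
  rw [hWeq] at hmain
  convert! hmain using 1
  have h1t : 1 - t = 1 / (1+x) := by rw [ht_def]; field_simp; ring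
  rw [hc_def, h1t, ht_def, div_pow, one_pow]
  have hexp : Real.exp (-(a * x) / (1 + x)) * Real.exp (a * x / (1+x)) = 1 := by
    rw [← Real.exp_add, ← Real.exp_zero]
    congr 1
    rw [neg_div]; ring
  have h3 : ((1+x):ℝ)^(m+1) ≠ 0 := pow_ne_zero _ (ne_of_gt h1x)
  rw [← mul_div_assoc]
  generalize Real.exp (-(a * x) / (1 + x)) = E1 at hexp ⊢
  generalize Real.exp (a * x / (1 + x)) = E2 at hexp ⊢
  field_simp
  linear_combination (-1 : ℝ) * hexp
lemma W_succ {n : ℕ} {a x : ℝ} (hx : 0 ≤ x) (k : ℕ) :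
    ((k:ℝ)+1) * W n a (k+1) x
      = ((n:ℝ)*x) * W (n+1) a k x + (a*x/(1+x)) * W n a k x := by
  have h1x : (0:ℝ) < 1 + x := by linarith
  have h1 : (1+x) ≠ 0 := ne_of_gt h1x
  have hk0 : (k.factorial : ℝ) ≠ 0 := by positivity
  have hfac : (((k+1).factorial : ℕ) : ℝ) = ((k:ℝ)+1) * (k.factorial : ℝ) := by
    rw [Nat.factorial_succ]; push_cast; ring
  simp only [W]
  rw [pCoef_succ, hfac]
  have hp1 : ((1+x):ℝ)^(k+1+n) = (1+x)^(k+n) * (1+x) := by rw [show k+1+n = (k+n)+1 from by omega, pow_succ]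
  have hp2 : ((1+x):ℝ)^(k+(n+1)) = (1+x)^(k+n) * (1+x) := by rw [show k+(n+1) = (k+n)+1 from by omega, pow_succ]
  rw [hp1, hp2]
  have hpk : ((1+x):ℝ)^(k+n) ≠ 0 := pow_ne_zero _ h1
  have hk1 : ((k:ℝ)+1) ≠ 0 := by positivity
  field_simp
  ring

lemma hasSum_kW {n : ℕ} {a x : ℝ} (ha : 0 ≤ a) (hn : 1 ≤ n) (hx : 0 ≤ x) :
    HasSum (fun k : ℕ => (k:ℝ) * W n a k x) ((n:ℝ)*x + a*x/(1+x)) := by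
  have h1 := hasSum_W (n := n) ha hn hx
  have h2 := hasSum_W (n := n+1) ha (by omega) hx
  have h3 : HasSum (fun k : ℕ => ((k:ℝ)+1) * W n a (k+1) x) ((n:ℝ)*x + a*x/(1+x)) := by
    have h := (h2.mul_left ((n:ℝ)*x)).add (h1.mul_left (a*x/(1+x)))
    simp only [mul_one] at h
    have e : (fun k : ℕ => ((k:ℝ)+1) * W n a (k+1) x)
        = fun k : ℕ => ((n:ℝ)*x) * W (n+1) a k x + (a*x/(1+x)) * W n a k x :=
      funext fun k => W_succ hx k
    rw [e]
    exact h
  refine (hasSum_nat_add_iff' 1).mp ?_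
  simpa using h3

lemma TKS_id {n : ℕ} {a α β x : ℝ} (ha : 0 ≤ a) (hn : 1 ≤ n) (hβ : 0 ≤ β) (hx : 0 ≤ x) :
    TKS n a α β (fun t => t) x
      = ((n:ℝ)*x + a*x/(1+x) + α + 1/2) / ((n:ℝ) + β) := by
  have hn1 : (1:ℝ) ≤ (n:ℝ) := by exact_mod_cast hn
  have hc : (0:ℝ) < (n:ℝ) + β := by linarith
  have hc0 : ((n:ℝ) + β) ≠ 0 := ne_of_gt hc
  have hW := hasSum_W (n := n) ha hn hx
  have hkW := hasSum_kW (n := n) ha hn hx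
  have h : HasSum (fun k : ℕ => W n a k x *
      ∫ t in (((k : ℝ) + α) / ((n : ℝ) + β))..(((k : ℝ) + α + 1) / ((n : ℝ) + β)), t)
      ((((n:ℝ)*x + a*x/(1+x)) + (α + 1/2) * 1) / ((n:ℝ)+β)^2) := by
    have h0 := (hkW.add (hW.mul_left (α + 1/2))).div_const (((n:ℝ)+β)^2)
    have e : (fun k : ℕ => W n a k x *
        ∫ t in (((k : ℝ) + α) / ((n : ℝ) + β))..(((k : ℝ) + α + 1) / ((n : ℝ) + β)), t)
        = fun k : ℕ => ((k:ℝ) * W n a k x + (α + 1/2) * W n a k x) / (((n:ℝ)+β)^2) := by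
      funext k
      rw [integral_id]
      field_simp
      ring
    rw [e]
    exact h0
  rw [TKS, h.tsum_eq]
  field_simp
  ring

lemma TKS_bound {n : ℕ} {a α β x : ℝ} (ha : 0 ≤ a) (hα : 0 ≤ α) (hαβ : α ≤ β)
    (hn : 1 ≤ n) (hx : 0 ≤ x) :
    |TKS n a α β (fun t => t) x - x| / (1 + x^2)
      ≤ (a + α + β + 1/2) / ((n:ℝ) + β) := by
  have hβ : 0 ≤ β := le_trans hα hαβ
  have hn1 : (1:ℝ) ≤ (n:ℝ) := by exact_mod_cast hn
  have hc : (0:ℝ) < (n:ℝ) + β := by linarith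
  have h1x : (0:ℝ) < 1 + x := by linarith
  have key : TKS n a α β (fun t => t) x - x
      = (a*x/(1+x) + α + 1/2 - β*x) / ((n:ℝ)+β) := by
    rw [TKS_id ha hn hβ hx]
    field_simp
    ring
  rw [key, abs_div, abs_of_pos hc, div_div]
  rw [div_le_div_iff₀ (by positivity) hc]
  have h1 : a*x/(1+x) ≤ a := by
    rw [div_le_iff₀ h1x]; nlinarith
  have h2 : 0 ≤ a*x/(1+x) := by positivity
  have habs : |a*x/(1+x) + α + 1/2 - β*x| ≤ (a + α + β + 1/2) * (1 + x^2) := by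
    rw [abs_le]
    constructor <;> nlinarith [sq_nonneg x, sq_nonneg (1-x)]
  nlinarith [habs, sq_nonneg x]

theorem Top_weighted_convergence_id (a : ℝ) (ha : 0 ≤ a) (α β : ℝ) (hα : 0 ≤ α)
    (hαβ : α ≤ β) :
    Tendsto (fun n : ℕ =>
        ⨆ x : {x : ℝ // 0 ≤ x},
          |TKS n a α β (fun t => t) x.val - x.val| / (1 + x.val ^ 2))
      atTop (nhds 0) := by
  have hβ : 0 ≤ β := le_trans hα hαβ
  set C : ℝ := a + α + β + 1/2 with hC
  haveI : Nonempty {x : ℝ // 0 ≤ x} := ⟨⟨0, le_refl 0⟩⟩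
  apply squeeze_zero' (g := fun n : ℕ => C / ((n:ℝ) + β))
  · filter_upwards [eventually_ge_atTop 1] with n hn
    have hbdd : BddAbove (Set.range fun x : {x : ℝ // 0 ≤ x} =>
        |TKS n a α β (fun t => t) x.val - x.val| / (1 + x.val ^ 2)) := by
      refine ⟨C / ((n:ℝ) + β), ?_⟩
      rintro _ ⟨x, rfl⟩
      exact TKS_bound ha hα hαβ hn x.2
    refine le_trans ?_ (le_ciSup hbdd ⟨0, le_refl 0⟩)
    positivity
  · filter_upwards [eventually_ge_atTop 1] with n hn
    exact ciSup_le fun x => TKS_bound ha hα hαβ hn x.2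
  · exact Tendsto.div_atTop tendsto_const_nhds
      (tendsto_atTop_add_const_right atTop β tendsto_natCast_atTop_atTop)
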